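/- For every integer n ≥ 2 there exists ε₀ > 0, depending only on n, with the following property. Let p ∈ ℝⁿ, let f be twice differentiable at p with negative semidefinite Hessian D²f(p) ≤ 0, let w be differentiable at p with |∇w(p)| ≤ ε₀, and set h = f − w. Then Σ_{i,j=1}^n a_{ij}(∇h(p)) ∂_{ij}f(p) ≥ (1 + (2.1 + 1.2(n−1)) |∇w(p)|) · Σ_{i,j=1}^n a_{ij}(∇f(p)) ∂_{ij}f(p). -/

import Mathlib

open scoped BigOperators RealInnerProductSpace
open Metric Filter Topology

noncomputable section

/-- The partial derivative `∂_i f` at `x`. -/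
def pd (n : ℕ) (f : EuclideanSpace ℝ (Fin n) → ℝ) (i : Fin n)
    (x : EuclideanSpace ℝ (Fin n)) : ℝ :=
  fderiv ℝ f x (EuclideanSpace.single i 1)

/-- The second partial derivative `∂_{ij} f` at `x`. -/
def pd2 (n : ℕ) (f : EuclideanSpace ℝ (Fin n) → ℝ) (i j : Fin n)
    (x : EuclideanSpace ℝ (Fin n)) : ℝ :=
  pd n (pd n f i) j x

/-- The gradient vector `∇f(x)`. -/
def gradAt (n : ℕ) (f : EuclideanSpace ℝ (Fin n) → ℝ) (x : EuclideanSpace ℝ (Fin n)) :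
    EuclideanSpace ℝ (Fin n) :=
  (EuclideanSpace.equiv (Fin n) ℝ).symm fun i => pd n f i x

/-- The coefficient matrix `a_{ij}(q) = δ_{ij} − q_i q_j/(1+|q|²)` of the minimal graph
operator. -/
def amat (n : ℕ) (q : EuclideanSpace ℝ (Fin n)) (i j : Fin n) : ℝ :=
  (if i = j then (1:ℝ) else 0) - q i * q j / (1 + ‖q‖ ^ 2)

section stmt8aux

variable {n : ℕ} {M : Fin n → Fin n → ℝ}

lemma stmt8aux_qf_eval (M : Fin n → Fin n → ℝ) (i j : Fin n) (α : ℝ) :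
    (∑ k, ∑ l, (α • EuclideanSpace.single i (1:ℝ) + EuclideanSpace.single j 1 :
        EuclideanSpace ℝ (Fin n)) k
      * (α • EuclideanSpace.single i (1:ℝ) + EuclideanSpace.single j 1 :
        EuclideanSpace ℝ (Fin n)) l * M k l)
    = α * α * M i i + α * M i j + α * M j i + M j j := by
  simp [EuclideanSpace.single_apply, mul_ite, ite_mul, mul_add, add_mul,
    Finset.sum_add_distrib, Finset.sum_ite_eq, Finset.sum_ite_eq']
  ring

lemma stmt8aux_qf_diag (hpos : ∀ v : EuclideanSpace ℝ (Fin n), 0 ≤ ∑ k, ∑ l, v k * v l * M k l)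
    (i : Fin n) : 0 ≤ M i i := by
  have := hpos (EuclideanSpace.single i 1)
  simpa [EuclideanSpace.single_apply, mul_ite, ite_mul, Finset.sum_ite_eq,
    Finset.sum_ite_eq'] using this

lemma stmt8aux_qf_cs (hpos : ∀ v : EuclideanSpace ℝ (Fin n), 0 ≤ ∑ k, ∑ l, v k * v l * M k l)
    (hsym : ∀ i j, M i j = M j i) (i j : Fin n) : M i j ^ 2 ≤ M i i * M j j := by
  have h : ∀ α : ℝ, 0 ≤ M i i * (α * α) + (2 * M i j) * α + M j j := by
    intro α
    have := hpos (α • EuclideanSpace.single i (1:ℝ) + EuclideanSpace.single j 1)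
    rw [stmt8aux_qf_eval M i j α] at this
    rw [← hsym i j] at this
    linarith
  have := discrim_le_zero h
  rw [discrim] at this
  nlinarith [this]

lemma stmt8aux_qf_bound
    (hpos : ∀ v : EuclideanSpace ℝ (Fin n), 0 ≤ ∑ k, ∑ l, v k * v l * M k l)
    (hsym : ∀ i j, M i j = M j i) (x : EuclideanSpace ℝ (Fin n)) :
    ∑ k, ∑ l, x k * x l * M k l ≤ (∑ i, M i i) * ‖x‖ ^ 2 := by
  have hd := stmt8aux_qf_diag hpos
  have step1 : ∑ k, ∑ l, x k * x l * M k l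
      ≤ ∑ k, ∑ l, (|x k| * Real.sqrt (M k k)) * (|x l| * Real.sqrt (M l l)) := by
    refine Finset.sum_le_sum fun k _ => Finset.sum_le_sum fun l _ => ?_
    have habs : |M k l| ≤ Real.sqrt (M k k) * Real.sqrt (M l l) := by
      rw [← Real.sqrt_mul (hd k), ← Real.sqrt_sq_eq_abs]
      exact Real.sqrt_le_sqrt (stmt8aux_qf_cs hpos hsym k l)
    calc x k * x l * M k l ≤ |x k * x l * M k l| := le_abs_self _
      _ = |x k| * |x l| * |M k l| := by rw [abs_mul, abs_mul]
      _ ≤ |x k| * |x l| * (Real.sqrt (M k k) * Real.sqrt (M l l)) :=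
          mul_le_mul_of_nonneg_left habs (by positivity)
      _ = (|x k| * Real.sqrt (M k k)) * (|x l| * Real.sqrt (M l l)) := by ring
  have step2 : ∑ k, ∑ l, (|x k| * Real.sqrt (M k k)) * (|x l| * Real.sqrt (M l l))
      = (∑ k, |x k| * Real.sqrt (M k k)) ^ 2 := by
    rw [sq, Finset.sum_mul_sum]
  have step3 : (∑ k, |x k| * Real.sqrt (M k k)) ^ 2
      ≤ (∑ k, |x k| ^ 2) * ∑ k, Real.sqrt (M k k) ^ 2 :=
    Finset.sum_mul_sq_le_sq_mul_sq _ _ _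
  have h4 : (∑ k, Real.sqrt (M k k) ^ 2) = ∑ i, M i i :=
    Finset.sum_congr rfl fun k _ => Real.sq_sqrt (hd k)
  have h5 : (∑ k, |x k| ^ 2) = ‖x‖ ^ 2 := by
    rw [EuclideanSpace.norm_eq, Real.sq_sqrt (by positivity)]
    exact Finset.sum_congr rfl fun k _ => by rw [sq_abs]; simp [Real.norm_eq_abs, sq_abs]
  calc ∑ k, ∑ l, x k * x l * M k l ≤ _ := step1
    _ = _ := step2
    _ ≤ _ := step3
    _ = (∑ i, M i i) * ‖x‖ ^ 2 := by rw [h4, h5]; ring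

end stmt8aux

/-- For every `n ≥ 2` there is `ε₀ > 0` such that: if `f` is twice
differentiable at `p` with negative semidefinite Hessian, `w` is differentiable at `p` with
`|∇w(p)| ≤ ε₀`, and `h = f − w`, then
`Σ a_{ij}(∇h(p)) ∂_{ij}f(p) ≥ (1 + (2.1 + 1.2(n−1))|∇w(p)|) Σ a_{ij}(∇f(p)) ∂_{ij}f(p)`. -/
theorem stmt8 (n : ℕ) (hn : 2 ≤ n) :
    ∃ ε₀ > (0:ℝ), ∀ (p : EuclideanSpace ℝ (Fin n)) (f w : EuclideanSpace ℝ (Fin n) → ℝ),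
      -- `f` is twice differentiable at `p`:
      (∀ᶠ y in 𝓝 p, DifferentiableAt ℝ f y) →
      DifferentiableAt ℝ (fderiv ℝ f) p →
      -- the Hessian of `f` at `p` is negative semidefinite:
      (∀ v : EuclideanSpace ℝ (Fin n), ∑ i, ∑ j, v i * v j * pd2 n f i j p ≤ 0) →
      -- `w` is differentiable at `p` with small gradient:
      DifferentiableAt ℝ w p →
      ‖gradAt n w p‖ ≤ ε₀ →
      (1 + (2.1 + 1.2 * ((n : ℝ) - 1)) * ‖gradAt n w p‖)
          * ∑ i, ∑ j, amat n (gradAt n f p) i j * pd2 n f i j p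
        ≤ ∑ i, ∑ j, amat n (gradAt n (fun y => f y - w y) p) i j * pd2 n f i j p := by
  have hn2 : (2:ℝ) ≤ (n:ℝ) := by exact_mod_cast hn
  set C : ℝ := 2.1 + 1.2 * ((n : ℝ) - 1) with hCdef
  have hCval : C = 21/10 + (12/10)*((n:ℝ)-1) := by rw [hCdef]; norm_num
  clear_value C
  clear hCdef
  have hC33 : (33:ℝ)/10 ≤ C := by rw [hCval]; linarith only [hn2]
  have hCpos : (0:ℝ) < C := by linarith only [hC33]
  refine ⟨1/(10*C), div_pos one_pos (by linarith), ?_⟩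
  intro p f w hev _hdf2 hH hdw hsmall
  have hdf : DifferentiableAt ℝ f p := hev.self_of_nhds
  -- gradient vectors
  set q := gradAt n f p with hqdef
  set r := gradAt n w p with hrdef
  set u := gradAt n (fun y => f y - w y) p with hudef
  have hpd : ∀ i, pd n (fun y => f y - w y) i p = pd n f i p - pd n w i p := by
    intro i
    simp only [pd]
    rw [fderiv_fun_sub hdf hdw]
    simp
  have hu : u = q - r := by
    ext i
    rw [hudef, hqdef, hrdef]
    simp [gradAt, hpd i]
  have hq : u + r = q := by rw [hu]; abel
  -- the (symmetrized, negated) Hessian matrix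
  set M : Fin n → Fin n → ℝ := fun i j => -(pd2 n f i j p + pd2 n f j i p)/2 with hMdef
  have hsym : ∀ i j, M i j = M j i := by
    intro i j; simp only [hMdef]; ring
  have key_add : ∀ (A B : Fin n → Fin n → ℝ),
      (∑ k, ∑ l, (A k l + B k l)) = (∑ k, ∑ l, A k l) + (∑ k, ∑ l, B k l) := by
    intro A B
    rw [← Finset.sum_add_distrib]
    exact Finset.sum_congr rfl fun k _ => Finset.sum_add_distrib
  have key_mul : ∀ (d : ℝ) (A : Fin n → Fin n → ℝ),
      (∑ k, ∑ l, d * A k l) = d * ∑ k, ∑ l, A k l := by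
    intro d A
    rw [Finset.mul_sum]
    exact Finset.sum_congr rfl fun k _ => (Finset.mul_sum _ _ _).symm
  have hflip : ∀ v : EuclideanSpace ℝ (Fin n),
      (∑ k, ∑ l, v k * v l * pd2 n f l k p) = ∑ k, ∑ l, v k * v l * pd2 n f k l p := by
    intro v
    rw [Finset.sum_comm]
    exact Finset.sum_congr rfl fun k _ => Finset.sum_congr rfl fun l _ => by ring
  have hswap : ∀ v : EuclideanSpace ℝ (Fin n),
      (∑ k, ∑ l, v k * v l * M k l) = -∑ k, ∑ l, v k * v l * pd2 n f k l p := by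
    intro v
    calc (∑ k, ∑ l, v k * v l * M k l)
        = ∑ k, ∑ l, ((-1/2) * (v k * v l * pd2 n f k l p)
            + (-1/2) * (v k * v l * pd2 n f l k p)) := by
          simp only [hMdef]
          exact Finset.sum_congr rfl fun k _ => Finset.sum_congr rfl fun l _ => by ring
      _ = (-1/2) * (∑ k, ∑ l, v k * v l * pd2 n f k l p)
            + (-1/2) * (∑ k, ∑ l, v k * v l * pd2 n f l k p) := by
          rw [key_add, key_mul, key_mul]
      _ = -∑ k, ∑ l, v k * v l * pd2 n f k l p := by rw [hflip v]; ring
  have hpos : ∀ v : EuclideanSpace ℝ (Fin n), 0 ≤ ∑ k, ∑ l, v k * v l * M k l := by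
    intro v
    rw [hswap v]
    linarith only [hH v]
  set T := ∑ i, M i i with hTdef
  have hT : 0 ≤ T := by
    rw [hTdef]
    exact Finset.sum_nonneg fun i _ => stmt8aux_qf_diag hpos i
  have hTval : (∑ i, pd2 n f i i p) = -T := by
    rw [hTdef, ← Finset.sum_neg_distrib]
    exact Finset.sum_congr rfl fun i _ => by simp only [hMdef]; ring
  -- the basic sum identity
  have hsum : ∀ x : EuclideanSpace ℝ (Fin n),
      (∑ i, ∑ j, amat n x i j * pd2 n f i j p)
      = -T + (∑ k, ∑ l, x k * x l * M k l)/(1 + ‖x‖^2) := by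
    intro x
    have h1 : ∀ i j, amat n x i j * pd2 n f i j p
        = (if i = j then pd2 n f i j p else 0)
          - (x i * x j * pd2 n f i j p)/(1+‖x‖^2) := by
      intro i j
      by_cases h : i = j
      · simp only [amat, if_pos h]; ring
      · simp only [amat, if_neg h]; ring
    have h2 : (∑ i, ∑ j, amat n x i j * pd2 n f i j p)
        = (∑ i, ∑ j, (if i = j then pd2 n f i j p else 0))
          - ∑ i, ∑ j, (x i * x j * pd2 n f i j p)/(1+‖x‖^2) := by
      rw [← Finset.sum_sub_distrib]
      refine Finset.sum_congr rfl fun i _ => ?_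
      rw [← Finset.sum_sub_distrib]
      exact Finset.sum_congr rfl fun j _ => h1 i j
    have h3 : (∑ i, ∑ j, (if i = j then pd2 n f i j p else 0)) = ∑ i, pd2 n f i i p := by
      refine Finset.sum_congr rfl fun i _ => ?_
      simp
    have h4 : (∑ i, ∑ j, (x i * x j * pd2 n f i j p)/(1+‖x‖^2))
        = (∑ i, ∑ j, x i * x j * pd2 n f i j p)/(1+‖x‖^2) := by
      simp_rw [← Finset.sum_div]
    have h6 : (∑ k, ∑ l, x k * x l * pd2 n f k l p)
        = -(∑ k, ∑ l, x k * x l * M k l) := by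
      linarith [hswap x]
    rw [h2, h3, h4, hTval, h6]
    ring
  -- scalar abbreviations
  set s := ‖r‖ with hsdef0
  set t := ‖u‖ with htdef0
  set m := ‖q‖ with hmdef0
  set c : ℝ := ⟪u, r⟫ with hcdef
  set a := ∑ k, ∑ l, u k * u l * M k l with hadef
  set b := ∑ k, ∑ l, q k * q l * M k l with hbdef
  set B := ∑ k, ∑ l, u k * q l * M k l with hBdef
  set e := ∑ k, ∑ l, r k * r l * M k l with hedef
  set D' := 1 + t^2 with hD'def
  set D := 1 + m^2 with hDdef
  set g := 1 + C*s with hgdef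
  set K := g * D' with hKdef
  set N := K - D with hNdef
  set wv := D • u - K • q with hwvdef
  set Pw := ∑ k, ∑ l, wv k * wv l * M k l with hPwdef
  set nw := ‖wv‖^2 with hnwdef0
  clear_value q r u M T s t m c a b B e D' D g K N wv Pw nw
  -- basic facts
  have hs0 : 0 ≤ s := by rw [hsdef0]; exact norm_nonneg r
  have ht0 : 0 ≤ t := by rw [htdef0]; exact norm_nonneg u
  have hD'pos : (0:ℝ) < D' := by rw [hD'def]; positivity
  have hD'1 : (1:ℝ) ≤ D' := by rw [hD'def]; linarith [sq_nonneg t]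
  have ht2 : 2*t ≤ D' := by rw [hD'def]; linarith [sq_nonneg (t-1)]
  have hDpos : (0:ℝ) < D := by rw [hDdef]; positivity
  have hCs0 : 0 ≤ C*s := mul_nonneg hCpos.le hs0
  have hgpos : (0:ℝ) < g := by rw [hgdef]; linarith only [hCs0]
  have hKpos : (0:ℝ) < K := by rw [hKdef]; exact mul_pos hgpos hD'pos
  have hcle : c ≤ t*s := by
    rw [hcdef, htdef0, hsdef0]; exact real_inner_le_norm u r
  have hm : m^2 = t^2 + 2*c + s^2 := by
    rw [hmdef0, ← hq, norm_add_sq_real, ← htdef0, ← hsdef0, ← hcdef]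
  have hDval : D = 1 + t^2 + 2*c + s^2 := by rw [hDdef, hm]; ring
  have hι : ⟪u, q⟫ = t^2 + c := by
    rw [← hq, inner_add_right, real_inner_self_eq_norm_sq, ← htdef0, ← hcdef]
  -- smallness bounds
  have hsmall2 : C*s ≤ 1/10 := by
    have h1 : C*s ≤ C*(1/(10*C)) := mul_le_mul_of_nonneg_left hsmall hCpos.le
    have h2 : C*(1/(10*C)) = 1/10 := by
      field_simp
    linarith only [h1, h2.le]
  have hs33 : s ≤ 1/33 := by
    have h1 : (1:ℝ)/(10*C) ≤ 1/33 := one_div_le_one_div_of_le (by norm_num) (by linarith)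
    linarith only [hsmall, h1]
  -- coordinate expansions
  have hcross : (∑ k, ∑ l, q k * u l * M k l) = ∑ k, ∑ l, u k * q l * M k l := by
    rw [Finset.sum_comm]
    exact Finset.sum_congr rfl fun k _ => Finset.sum_congr rfl fun l _ => by
      rw [hsym]; ring
  have hkr : ∀ k, r k = q k - u k := by
    intro k; rw [hu]; simp
  have hee : e = a - 2*B + b := by
    have h1 : ∀ k l : Fin n, r k * r l * M k l
        = (q k * q l * M k l) - (u k * q l * M k l)
          - (q k * u l * M k l) + (u k * u l * M k l) := by
      intro k l; rw [hkr k, hkr l]; ring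
    calc e = ∑ k, ∑ l, ((q k * q l * M k l) - (u k * q l * M k l)
          - (q k * u l * M k l) + (u k * u l * M k l)) := by
          rw [hedef]
          exact Finset.sum_congr rfl fun k _ => Finset.sum_congr rfl fun l _ => h1 k l
      _ = (∑ k, ∑ l, q k * q l * M k l) - (∑ k, ∑ l, u k * q l * M k l)
          - (∑ k, ∑ l, q k * u l * M k l) + (∑ k, ∑ l, u k * u l * M k l) := by
          simp only [Finset.sum_add_distrib, Finset.sum_sub_distrib]
      _ = a - 2*B + b := by
          rw [hcross, ← hadef, ← hBdef, ← hbdef]; ring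
  have hkwv : ∀ k, wv k = D * u k - K * q k := by
    intro k; rw [hwvdef]; simp
  have hPwexp : Pw = D^2*a - 2*(D*K)*B + K^2*b := by
    have h1 : ∀ k l : Fin n, wv k * wv l * M k l
        = D^2 * (u k * u l * M k l) - (D*K) * (u k * q l * M k l)
          - (D*K) * (q k * u l * M k l) + K^2 * (q k * q l * M k l) := by
      intro k l; rw [hkwv k, hkwv l]; ring
    calc Pw = ∑ k, ∑ l, (D^2 * (u k * u l * M k l) - (D*K) * (u k * q l * M k l)
          - (D*K) * (q k * u l * M k l) + K^2 * (q k * q l * M k l)) := by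
          rw [hPwdef]
          exact Finset.sum_congr rfl fun k _ => Finset.sum_congr rfl fun l _ => h1 k l
      _ = D^2 * (∑ k, ∑ l, u k * u l * M k l) - (D*K) * (∑ k, ∑ l, u k * q l * M k l)
          - (D*K) * (∑ k, ∑ l, q k * u l * M k l) + K^2 * (∑ k, ∑ l, q k * q l * M k l) := by
          simp only [Finset.sum_add_distrib, Finset.sum_sub_distrib, ← Finset.mul_sum]
      _ = D^2*a - 2*(D*K)*B + K^2*b := by
          rw [hcross, ← hadef, ← hBdef, ← hbdef]; ring
  have hnwval0 : nw = D^2*t^2 - 2*(D*K)*(t^2+c) + K^2*m^2 := by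
    rw [hnwdef0, hwvdef, norm_sub_sq_real, real_inner_smul_left, real_inner_smul_right, hι,
      norm_smul, norm_smul, Real.norm_eq_abs, Real.norm_eq_abs, abs_of_pos hDpos,
      abs_of_pos hKpos, ← htdef0, ← hmdef0]
    ring
  have hnwval : nw = C*s*(N*(D*D')) + g*(s^2*(D*D')) - N^2 := by
    rw [hnwval0, hm]
    simp only [hNdef, hKdef, hgdef, hDval, hD'def]
    ring
  have hNval : N = C*s*D' - 2*c - s^2 := by
    simp only [hNdef, hKdef, hgdef, hDval, hD'def]
    ring
  -- case split on s = 0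
  rcases eq_or_lt_of_le hs0 with hs | hs
  · -- s = 0 : both sides are equal
    have hs' : ‖r‖ = 0 := by rw [← hsdef0]; exact hs.symm
    have hr0 : r = 0 := norm_eq_zero.mp hs'
    have huq : u = q := by rw [hu, hr0, sub_zero]
    rw [huq]
    have hg1 : g = 1 := by rw [hgdef, ← hs]; ring
    rw [hg1, one_mul]
  · -- main case s > 0
    have hC1s : (0:ℝ) < C - 1 - s := by linarith only [hC33, hs33]
    have hNlow : s*(D'*(C-1-s)) ≤ N := by
      rw [hNval]
      have f1 : s*(2*t) ≤ s*D' := mul_le_mul_of_nonneg_left ht2 hs0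
      have f2 : s^2*1 ≤ s^2*D' := mul_le_mul_of_nonneg_left hD'1 (sq_nonneg s)
      linarith only [hcle, f1, f2]
    have hNpos : 0 < N :=
      lt_of_lt_of_le (mul_pos hs (mul_pos hD'pos hC1s)) hNlow
    have hmain : g*(1+s+s^2) ≤ (C-1-s)^2 := by
      rw [hgdef]
      have hCs2 : C*s*s ≤ (1/10)*s := mul_le_mul_of_nonneg_right hsmall2 hs0
      have hCs3 : C*s*s^2 ≤ (1/10)*s^2 := mul_le_mul_of_nonneg_right hsmall2 (sq_nonneg s)
      have hC2 : (33/10)*C ≤ C^2 := by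
        have h := mul_le_mul_of_nonneg_right hC33 hCpos.le
        linarith only [h]
      have hss : s^2 ≤ (1/33)*s := by
        have h := mul_le_mul_of_nonneg_right hs33 hs0
        linarith only [h]
      linarith only [hCs2, hCs3, hC2, hss, hsmall2, hs0, hs33, hC33]
    have hDle : D ≤ D'*(1+s+s^2) := by
      rw [hDval, hD'def]
      have f1 : 0 ≤ s*(t-1)^2 := mul_nonneg hs0 (sq_nonneg _)
      linarith only [hcle, f1, sq_nonneg (t*s)]
    have hN2 : g*(s^2*(D*D')) ≤ N^2 := by
      have h0 : 0 ≤ s*(D'*(C-1-s)) := mul_nonneg hs0 (mul_nonneg hD'pos.le hC1s.le)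
      have h1 : (s*(D'*(C-1-s)))^2 ≤ N^2 := pow_le_pow_left₀ h0 hNlow 2
      calc g*(s^2*(D*D')) = (g*s^2*D')*D := by ring
        _ ≤ (g*s^2*D')*(D'*(1+s+s^2)) := mul_le_mul_of_nonneg_left hDle
            (mul_nonneg (mul_nonneg hgpos.le (sq_nonneg s)) hD'pos.le)
        _ = (s^2*D'^2)*(g*(1+s+s^2)) := by ring
        _ ≤ (s^2*D'^2)*((C-1-s)^2) := mul_le_mul_of_nonneg_left hmain (by positivity)
        _ = (s*(D'*(C-1-s)))^2 := by ring
        _ ≤ N^2 := h1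
    have hnwle : nw ≤ C*s*(N*(D*D')) := by rw [hnwval]; linarith only [hN2]
    have hPwle : Pw ≤ T * nw := by
      have h := stmt8aux_qf_bound hpos hsym wv
      rw [← hPwdef, ← hTdef, ← hnwdef0] at h
      exact h
    have he0 : 0 ≤ e := by rw [hedef]; exact hpos r
    have hkey : g*b*(N*D') - a*(N*D) = Pw - (g*(D*D'))*e := by
      rw [hPwexp, hee]
      simp only [hNdef, hKdef]
      ring
    have hchain : g*b*(N*D') - a*(N*D) ≤ C*s*T*(N*(D*D')) := by
      calc g*b*(N*D') - a*(N*D) = Pw - (g*(D*D'))*e := hkey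
        _ ≤ Pw := by
            have h0 : 0 ≤ (g*(D*D'))*e :=
              mul_nonneg (mul_nonneg hgpos.le (mul_nonneg hDpos.le hD'pos.le)) he0
            linarith only [h0]
        _ ≤ T * nw := hPwle
        _ ≤ T * (C*s*(N*(D*D'))) := mul_le_mul_of_nonneg_left hnwle hT
        _ = C*s*T*(N*(D*D')) := by ring
    have h9' : N*(g*b*D' - a*D) ≤ N*(C*s*T*(D*D')) := by
      calc N*(g*b*D' - a*D) = g*b*(N*D') - a*(N*D) := by ring
        _ ≤ C*s*T*(N*(D*D')) := hchain
        _ = N*(C*s*T*(D*D')) := by ring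
    have h9 : g*b*D' - a*D ≤ C*s*T*(D*D') := le_of_mul_le_mul_left h9' hNpos
    -- assemble the goal
    have hqn : (1:ℝ) + ‖q‖^2 = D := by rw [hDdef, hmdef0]
    have hun : (1:ℝ) + ‖u‖^2 = D' := by rw [hD'def, htdef0]
    rw [hsum q, hsum u, hqn, hun, ← hbdef, ← hadef]
    have h10 : g*b/D - a/D' ≤ C*s*T := by
      rw [div_sub_div _ _ (ne_of_gt hDpos) (ne_of_gt hD'pos),
        div_le_iff₀ (mul_pos hDpos hD'pos)]
      linarith only [h9]
    rw [hgdef] at h10 ⊢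
    ring_nf at h10 ⊢
    linarith only [h10]
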